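/- If R is a ring with unit whose underlying additive abelian group is not residually finite, then the category of free left R-modules on at most 2 generators (with R-linear maps) is not residually finite. -/

import Mathlib

open CategoryTheory

/-- A category is residually finite if any two distinct parallel morphisms
can be separated by a functor to a finite category. -/
def ResiduallyFiniteCat (C : Type*) [Category C] : Prop :=
  ∀ {X Y : C} (f g : X ⟶ Y), f ≠ g →
    ∃ (D : Type) (_ : SmallCategory D) (_ : FinCategory D) (F : C ⥤ D),
      F.map f ≠ F.map g

/-- An additive group is residually finite if distinct elements can be
separated by homomorphisms to finite additive groups. -/
def ResiduallyFiniteAddGroup (A : Type*) [AddGroup A] : Prop :=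
  ∀ f g : A, f ≠ g →
    ∃ (D : Type) (_ : AddGroup D) (_ : Fintype D) (φ : A →+ D), φ f ≠ φ g

/-- The category of free left `R`-modules on at most `N` generators, as the
full subcategory of `ModuleCat R` on modules isomorphic to some `R^n`, `n ≤ N`. -/
abbrev FreeModCatLE (R : Type) [Ring R] (N : ℕ) :=
  CategoryTheory.ObjectProperty.FullSubcategory
    (fun M : ModuleCat.{0} R => ∃ n : ℕ, n ≤ N ∧ Nonempty (M ≃ₗ[R] (Fin n → R)))

/-- unitriangular linear map -/
def uni (R : Type) [Ring R] (x : R) : (Fin 2 → R) →ₗ[R] (Fin 2 → R) where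
  toFun v := fun i => v i + if i = 0 then v 1 * x else 0
  map_add' u v := by funext i; by_cases h : i = 0 <;> simp [h, add_mul] <;> abel
  map_smul' r v := by funext i; by_cases h : i = 0 <;> simp [h, mul_add, mul_assoc]

lemma uni_zero (R : Type) [Ring R] : uni R 0 = LinearMap.id := by
  apply LinearMap.ext; intro v; funext i
  by_cases h : i = 0 <;> simp [uni, h]

lemma uni_comp (R : Type) [Ring R] (x y : R) :
    (uni R x).comp (uni R y) = uni R (x + y) := by
  apply LinearMap.ext; intro v; funext i
  by_cases h : i = 0 <;> simp [uni, h, mul_add] <;> abel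

/-- If the additive group of `R` is not residually finite, then the category of
free left `R`-modules on at most 2 generators is not residually finite. -/
theorem freeModCatLE_two_not_residuallyFinite (R : Type) [Ring R]
    (hR : ¬ ResiduallyFiniteAddGroup R) :
    ¬ ResiduallyFiniteCat (FreeModCatLE R 2) := by
  intro hC
  apply hR
  intro a b hab
  set M : FreeModCatLE R 2 :=
    ⟨ModuleCat.of R (Fin 2 → R), ⟨2, le_refl 2, ⟨LinearEquiv.refl R _⟩⟩⟩ with hM
  -- morphisms
  have key : ∀ x : R, ((ObjectProperty.homMk (ModuleCat.ofHom (uni R x)) : M ⟶ M)).hom.hom = uni R x := fun _ => rfl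
  -- iso for each x
  have inv_comp : ∀ x : R, (uni R x).comp (uni R (-x)) = LinearMap.id := by
    intro x; rw [uni_comp]; simp
    apply LinearMap.ext; intro v; funext i
    by_cases h : i = 0 <;> simp [uni, h]
  let e : R → (M ≅ M) := fun x =>
    { hom := (ObjectProperty.homMk (ModuleCat.ofHom (uni R x)) : M ⟶ M)
      inv := (ObjectProperty.homMk (ModuleCat.ofHom (uni R (-x))) : M ⟶ M)
      hom_inv_id := by
        apply ObjectProperty.hom_ext; apply ModuleCat.hom_ext
        show (uni R (-x)).comp (uni R x) = LinearMap.id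
        rw [uni_comp, neg_add_cancel]; exact uni_zero R
      inv_hom_id := by
        apply ObjectProperty.hom_ext; apply ModuleCat.hom_ext
        show (uni R x).comp (uni R (-x)) = LinearMap.id
        exact inv_comp x }
  have hfg : e a ≠ e b := by
    intro h
    apply hab
    have h1 : uni R a = uni R b := congrArg (fun f => f.hom.hom) (congrArg Iso.hom h)
    have h2 := congrFun (DFunLike.congr_fun h1 ![0,1]) 0
    simpa [uni] using h2
  have hne : (e a).hom ≠ (e b).hom := fun h => hfg (Iso.ext h)
  obtain ⟨D, _, hD, F, hF⟩ := hC (e a).hom (e b).hom hne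
  refine ⟨Additive (Aut (F.obj M)), inferInstance, ?_, ?_, ?_⟩
  · haveI : Fintype (F.obj M ⟶ F.obj M) := hD.fintypeHom _ _
    exact Fintype.ofInjective (fun (i : Additive (Aut (F.obj M))) => (i.toMul : Aut (F.obj M)).hom)
      (fun i j h => by
        apply Additive.toMul.injective; exact Iso.ext h)
  · let ψ : R → Aut (F.obj M) := fun x => F.mapIso (e x)
    have hψ : ∀ x y : R, ψ (x + y) = ψ x * ψ y := by
      intro x y
      have hmul : ∀ i j : Aut (F.obj M), i * j = j ≪≫ i := fun _ _ => rfl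
      rw [hmul]
      apply Iso.ext
      show F.map (e (x + y)).hom = F.map (e y).hom ≫ F.map (e x).hom
      rw [← F.map_comp]
      congr 1
      apply ObjectProperty.hom_ext; apply ModuleCat.hom_ext
      exact (uni_comp R x y).symm
    refine AddMonoidHom.mk' (fun x => Additive.ofMul (ψ x)) ?_
    intro x y
    apply Additive.toMul.injective
    exact hψ x y
  · intro h
    apply hF
    have := congrArg (fun z => (Additive.toMul z : Aut (F.obj M)).hom) h
    exact this
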